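/- Let g : ℝ → ℝ be continuous, bounded and nonnegative, let σ² > 0, and let κ_N → ∞ with κ_N = o(√N). Then the Riemann-type sums (2πNσ²)^{-1/2} ∑_{k} g((k - Nm)/√N)·exp(-(k-Nm)²/(2Nσ²)), where the sum is over integers k of fixed parity with |k - Nm| ≤ √N·κ_N, converge as N → ∞ (for any fixed m ∈ ℝ, with the sum over k ≡ N mod 2, i.e. spacing 2/√N, appropriately normalized by the spacing) to (2πσ²)^{-1/2}∫_ℝ g(x)e^{-x²/(2σ²)}dx. -/

import Mathlib

open Filter Real MeasureTheory

set_option maxHeartbeats 1000000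

/-- Grid point `(k - Nm)/√N`. -/
noncomputable def rsP (N : ℕ) (m : ℝ) (k : ℤ) : ℝ := ((k : ℝ) - N * m) / Real.sqrt N

lemma rs_sqrt_pos {N : ℕ} (hN : 1 ≤ N) : (0:ℝ) < Real.sqrt N :=
  Real.sqrt_pos.mpr (by exact_mod_cast hN)

lemma rsP_mem_Ico {N : ℕ} (hN : 1 ≤ N) (m x : ℝ) (k : ℤ) :
    x ∈ Set.Ico (rsP N m k) (rsP N m (k + 1)) ↔ ⌊Real.sqrt N * x + N * m⌋ = k := by
  have hs : (0:ℝ) < Real.sqrt N := rs_sqrt_pos hN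
  simp only [rsP, Set.mem_Ico, Int.floor_eq_iff]
  constructor
  · rintro ⟨h1, h2⟩
    rw [div_le_iff₀ hs] at h1
    rw [lt_div_iff₀ hs] at h2
    push_cast at h2 ⊢
    constructor <;> nlinarith
  · rintro ⟨h1, h2⟩
    push_cast at h2
    constructor
    · rw [div_le_iff₀ hs]; nlinarith
    · rw [lt_div_iff₀ hs]; push_cast; nlinarith

lemma rs_collapse (f : ℝ → ℝ) {N : ℕ} (hN : 1 ≤ N) (m x : ℝ) (a b : ℤ) :
    (∑ k ∈ Finset.Icc a b,
        (Set.Ico (rsP N m k) (rsP N m (k + 1))).indicator (fun _ => f (rsP N m k)) x)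
      = if ⌊Real.sqrt N * x + N * m⌋ ∈ Finset.Icc a b then
          f (rsP N m ⌊Real.sqrt N * x + N * m⌋) else 0 := by
  rw [← Finset.sum_ite_eq (Finset.Icc a b) ⌊Real.sqrt N * x + N * m⌋ (fun k => f (rsP N m k))]
  refine Finset.sum_congr rfl fun k _ => ?_
  by_cases h : ⌊Real.sqrt N * x + N * m⌋ = k
  · rw [if_pos h, Set.indicator_of_mem ((rsP_mem_Ico hN m x k).mpr h)]
  · rw [if_neg h, Set.indicator_of_notMem (fun hx => h ((rsP_mem_Ico hN m x k).mp hx))]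

lemma rs_integral (f : ℝ → ℝ) {N : ℕ} (hN : 1 ≤ N) (m : ℝ) (a b : ℤ) :
    (∫ x : ℝ, ∑ k ∈ Finset.Icc a b,
        (Set.Ico (rsP N m k) (rsP N m (k + 1))).indicator (fun _ => f (rsP N m k)) x)
      = (1 / Real.sqrt N) * ∑ k ∈ Finset.Icc a b, f (rsP N m k) := by
  have hs : (0:ℝ) < Real.sqrt N := rs_sqrt_pos hN
  rw [MeasureTheory.integral_finset_sum]
  · rw [Finset.mul_sum]
    refine Finset.sum_congr rfl fun k _ => ?_
    rw [MeasureTheory.integral_indicator_const _ measurableSet_Ico, Real.volume_real_Ico]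
    have h1 : rsP N m (k + 1) - rsP N m k = 1 / Real.sqrt N := by
      simp only [rsP]
      rw [div_sub_div_same]
      push_cast
      ring_nf
    rw [h1, max_eq_left (show (0:ℝ) ≤ 1 / Real.sqrt N by positivity), smul_eq_mul]
  · intro k _
    rw [MeasureTheory.integrable_indicator_iff measurableSet_Ico]
    exact MeasureTheory.integrableOn_const measure_Ico_lt_top.ne

theorem riemann_sum_gaussian_window (g : ℝ → ℝ) (hg_cont : Continuous g)
    (hg_bdd : ∃ C : ℝ, ∀ x, |g x| ≤ C) (hg_nonneg : ∀ x, 0 ≤ g x)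
    (σ : ℝ) (hσ : 0 < σ) (m : ℝ) (κ : ℕ → ℝ)
    (hκ : Tendsto κ atTop atTop)
    (hκo : Tendsto (fun N : ℕ => κ N / Real.sqrt N) atTop (nhds 0)) :
    Tendsto (fun N : ℕ =>
        (1 / Real.sqrt (2 * π * N * σ ^ 2)) *
          ∑ k ∈ Finset.Icc ⌈(N : ℝ) * m - Real.sqrt N * κ N⌉ ⌊(N : ℝ) * m + Real.sqrt N * κ N⌋,
            g (((k : ℝ) - N * m) / Real.sqrt N) *
              Real.exp (-(((k : ℝ) - N * m) / Real.sqrt N) ^ 2 / (2 * σ ^ 2)))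
      atTop
      (nhds ((1 / Real.sqrt (2 * π * σ ^ 2)) *
        ∫ x : ℝ, g x * Real.exp (-x ^ 2 / (2 * σ ^ 2)))) := by
  classical
  obtain ⟨C, hC⟩ := hg_bdd
  have hC0 : (0:ℝ) ≤ C := le_trans (abs_nonneg _) (hC 0)
  set f : ℝ → ℝ := fun x => g x * Real.exp (-x ^ 2 / (2 * σ ^ 2)) with hfdef
  have hf_cont : Continuous f := hg_cont.mul (Real.continuous_exp.comp (by continuity))
  have hf_nonneg : ∀ x, 0 ≤ f x := fun x => mul_nonneg (hg_nonneg x) (Real.exp_pos _).le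
  have hf_le : ∀ x, f x ≤ C * Real.exp (-x ^ 2 / (2 * σ ^ 2)) := fun x =>
    mul_le_mul_of_nonneg_right (le_trans (le_abs_self _) (hC x)) (Real.exp_pos _).le
  set a : ℕ → ℤ := fun N => ⌈(N : ℝ) * m - Real.sqrt N * κ N⌉ with hadef
  set b : ℕ → ℤ := fun N => ⌊(N : ℝ) * m + Real.sqrt N * κ N⌋ with hbdef
  set F : ℕ → ℝ → ℝ := fun N x => ∑ k ∈ Finset.Icc (a N) (b N),
      (Set.Ico (rsP N m k) (rsP N m (k + 1))).indicator (fun _ => f (rsP N m k)) x with hFdef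
  set h : ℝ → ℝ := fun x => C * Real.exp (-x ^ 2 / (8 * σ ^ 2))
      + (Set.Icc (-2 : ℝ) 2).indicator (fun _ => C) x with hhdef
  have hh_nonneg : ∀ x, 0 ≤ h x := fun x =>
    add_nonneg (by positivity) (Set.indicator_nonneg (fun _ _ => hC0) x)
  -- integrability of the dominating function
  have hh_int : Integrable h := by
    apply Integrable.add
    · have h1 : Integrable (fun x : ℝ => Real.exp (-(1 / (8 * σ ^ 2)) * x ^ 2)) :=
        integrable_exp_neg_mul_sq (by positivity)
      have h2 := h1.const_mul C
      have h3 : ∀ x : ℝ, -x ^ 2 / (8 * σ ^ 2) = -(1 / (8 * σ ^ 2)) * x ^ 2 := fun x => by ring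
      simpa only [h3] using h2
    · rw [MeasureTheory.integrable_indicator_iff measurableSet_Icc]
      exact MeasureTheory.integrableOn_const measure_Icc_lt_top.ne
  -- domination
  have hbound : ∀ᶠ N in atTop, ∀ᵐ x : ℝ, ‖F N x‖ ≤ h x := by
    filter_upwards [eventually_ge_atTop 1] with N hN
    refine Eventually.of_forall fun x => ?_
    have hs : (0:ℝ) < Real.sqrt N := rs_sqrt_pos hN
    have hs1 : (1:ℝ) ≤ Real.sqrt N := by
      rw [show (1:ℝ) = Real.sqrt 1 by simp]
      exact Real.sqrt_le_sqrt (by exact_mod_cast hN)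
    simp only [hFdef]
    rw [rs_collapse f hN m x (a N) (b N)]
    by_cases hk : ⌊Real.sqrt N * x + N * m⌋ ∈ Finset.Icc (a N) (b N)
    · rw [if_pos hk]
      set k0 := ⌊Real.sqrt N * x + N * m⌋ with hk0
      set y := rsP N m k0 with hy
      have hyx : y ≤ x := by
        rw [hy, rsP, div_le_iff₀ hs]
        have := Int.floor_le (Real.sqrt N * x + N * m)
        rw [← hk0] at this
        nlinarith
      have hxy : x - 1 ≤ y := by
        rw [hy, rsP, le_div_iff₀ hs]
        have := Int.sub_one_lt_floor (Real.sqrt N * x + N * m)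
        rw [← hk0] at this
        nlinarith
      rw [Real.norm_eq_abs, abs_of_nonneg (hf_nonneg y)]
      have hfy : f y ≤ C * Real.exp (-y ^ 2 / (2 * σ ^ 2)) := hf_le y
      by_cases hx2 : |x| ≤ 2
      · have hmem : x ∈ Set.Icc (-2 : ℝ) 2 := by
          rw [Set.mem_Icc]; exact abs_le.mp hx2
        have hexp1 : Real.exp (-y ^ 2 / (2 * σ ^ 2)) ≤ 1 := by
          apply Real.exp_le_one_iff.mpr
          apply div_nonpos_of_nonpos_of_nonneg (by nlinarith [sq_nonneg y]) (by positivity)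
        rw [hhdef]
        simp only [Set.indicator_of_mem hmem]
        have : (0:ℝ) ≤ C * Real.exp (-x ^ 2 / (8 * σ ^ 2)) := by positivity
        nlinarith
      · push_neg at hx2
        have hsq : x ^ 2 ≤ 4 * y ^ 2 := by
          rcases lt_abs.mp hx2 with hx | hx
          · nlinarith [mul_nonneg (show (0:ℝ) ≤ 2 * y - x by linarith)
              (show (0:ℝ) ≤ 2 * y + x by linarith)]
          · nlinarith [mul_nonneg (show (0:ℝ) ≤ x - y by nlinarith)
              (show (0:ℝ) ≤ -(x + y) by nlinarith), sq_nonneg y]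
        have hexp : Real.exp (-y ^ 2 / (2 * σ ^ 2)) ≤ Real.exp (-x ^ 2 / (8 * σ ^ 2)) := by
          apply Real.exp_le_exp.mpr
          rw [div_le_div_iff₀ (by positivity) (by positivity)]
          nlinarith
        rw [hhdef]
        have hind : (0:ℝ) ≤ (Set.Icc (-2 : ℝ) 2).indicator (fun _ => C) x :=
          Set.indicator_nonneg (fun _ _ => hC0) x
        have := mul_le_mul_of_nonneg_left hexp hC0
        simp only []
        nlinarith
    · rw [if_neg hk]
      simpa using hh_nonneg x
  -- measurability
  have hFmeas : ∀ᶠ N in atTop, AEStronglyMeasurable (F N) volume := by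
    refine Eventually.of_forall fun N => ?_
    exact (Finset.measurable_sum _ (fun k _ =>
      measurable_const.indicator measurableSet_Ico)).aestronglyMeasurable
  -- pointwise convergence
  have hlim : ∀ᵐ x : ℝ, Tendsto (fun N => F N x) atTop (nhds (f x)) := by
    refine Eventually.of_forall fun x => ?_
    have hsqrt : Tendsto (fun N : ℕ => Real.sqrt N) atTop atTop := by
      refine (tendsto_atTop_atTop_of_monotone (fun p q hpq => Real.sqrt_le_sqrt hpq) ?_).comp
        tendsto_natCast_atTop_atTop
      intro c; exact ⟨c ^ 2, by rw [Real.sqrt_sq_eq_abs]; exact le_abs_self c⟩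
    have hinv : Tendsto (fun N : ℕ => 1 / Real.sqrt N) atTop (nhds 0) := by
      simp only [one_div]; exact hsqrt.inv_tendsto_atTop
    -- the tagged point converges to x
    have hy_tendsto : Tendsto (fun N : ℕ => rsP N m ⌊Real.sqrt N * x + N * m⌋) atTop (nhds x) := by
      apply tendsto_of_tendsto_of_tendsto_of_le_of_le'
        (g := fun N : ℕ => x - 1 / Real.sqrt N) (h := fun _ : ℕ => x)
      · simpa using tendsto_const_nhds.sub hinv
      · exact tendsto_const_nhds
      · filter_upwards [eventually_ge_atTop 1] with N hN
        have hs : (0:ℝ) < Real.sqrt N := rs_sqrt_pos hN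
        rw [rsP, le_div_iff₀ hs]
        have h1 := Int.sub_one_lt_floor (Real.sqrt N * x + N * m)
        have h2 : (1 / Real.sqrt N) * Real.sqrt N = 1 := one_div_mul_cancel hs.ne'
        nlinarith
      · filter_upwards [eventually_ge_atTop 1] with N hN
        have hs : (0:ℝ) < Real.sqrt N := rs_sqrt_pos hN
        rw [rsP, div_le_iff₀ hs]
        have h1 := Int.floor_le (Real.sqrt N * x + N * m)
        nlinarith
    have hflim : Tendsto (fun N : ℕ => f (rsP N m ⌊Real.sqrt N * x + N * m⌋)) atTop (nhds (f x)) :=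
      (hf_cont.continuousAt.tendsto).comp hy_tendsto
    refine hflim.congr' ?_
    filter_upwards [eventually_ge_atTop 1, hκ.eventually_ge_atTop (|x| + 2)] with N hN hκN
    have hs : (0:ℝ) < Real.sqrt N := rs_sqrt_pos hN
    have hs1 : (1:ℝ) ≤ Real.sqrt N := by
      rw [show (1:ℝ) = Real.sqrt 1 by simp]
      exact Real.sqrt_le_sqrt (by exact_mod_cast hN)
    simp only [hFdef]
    rw [rs_collapse f hN m x (a N) (b N)]
    have hmem : ⌊Real.sqrt N * x + N * m⌋ ∈ Finset.Icc (a N) (b N) := by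
      rw [Finset.mem_Icc]
      constructor
      · have h1 : (a N : ℝ) < (N : ℝ) * m - Real.sqrt N * κ N + 1 :=
          Int.ceil_lt_add_one _
        have h2 : Real.sqrt N * x + N * m - 1 < (⌊Real.sqrt N * x + N * m⌋ : ℝ) :=
          Int.sub_one_lt_floor _
        have h3 : -|x| ≤ x := neg_abs_le x
        have h4 : (1:ℝ) * (x + κ N) ≤ Real.sqrt N * (x + κ N) :=
          mul_le_mul_of_nonneg_right hs1 (by linarith)
        have : (a N : ℝ) < (⌊Real.sqrt N * x + N * m⌋ : ℝ) := by linarith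
        exact_mod_cast this.le
      · have h1 : (N : ℝ) * m + Real.sqrt N * κ N - 1 < (b N : ℝ) :=
          Int.sub_one_lt_floor _
        have h2 : (⌊Real.sqrt N * x + N * m⌋ : ℝ) ≤ Real.sqrt N * x + N * m :=
          Int.floor_le _
        have h3 : x ≤ |x| := le_abs_self x
        have h4 : (1:ℝ) * (κ N - x) ≤ Real.sqrt N * (κ N - x) :=
          mul_le_mul_of_nonneg_right hs1 (by linarith)
        have : (⌊Real.sqrt N * x + N * m⌋ : ℝ) < (b N : ℝ) := by linarith
        exact_mod_cast this.le
    rw [if_pos hmem]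
  -- dominated convergence
  have key : Tendsto (fun N => ∫ x, F N x) atTop (nhds (∫ x, f x)) :=
    tendsto_integral_filter_of_dominated_convergence h hFmeas hbound hh_int hlim
  have key2 : Tendsto (fun N : ℕ => (1 / Real.sqrt N) * ∑ k ∈ Finset.Icc (a N) (b N),
      f (rsP N m k)) atTop (nhds (∫ x, f x)) := by
    refine key.congr' ?_
    filter_upwards [eventually_ge_atTop 1] with N hN
    exact rs_integral f hN m (a N) (b N)
  have key3 := key2.const_mul (1 / Real.sqrt (2 * π * σ ^ 2))
  refine Tendsto.congr (fun N => ?_) key3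
  have hsplit : (1:ℝ) / Real.sqrt (2 * π * (N:ℝ) * σ ^ 2)
      = (1 / Real.sqrt (2 * π * σ ^ 2)) * (1 / Real.sqrt N) := by
    rw [show 2 * π * (N:ℝ) * σ ^ 2 = (2 * π * σ ^ 2) * (N:ℝ) by ring,
      Real.sqrt_mul (by positivity)]
    rw [one_div, mul_inv, one_div, one_div]
  simp only [hfdef, rsP]
  rw [hsplit]
  simp only [hadef, hbdef, mul_assoc]
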